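/- (Gowers–Cauchy–Schwarz inequality for box norms) Let e = {e_1,...,e_d} be a basis of Z_N^d. For any family of real-valued functions (f_ω)_{ω ∈ {0,1}^d} on Z_N^d, one has E_{x ∈ Z_N^d, t ∈ Z_N^d} ∏_{ω ∈ {0,1}^d} f_ω(x + ω·t·e) ≤ ∏_{ω ∈ {0,1}^d} ||f_ω||_{□(e)^d}. -/

import Mathlib

set_option linter.unusedSectionVars false
set_option maxHeartbeats 1000000
open Finset
section
variable (N d : ℕ) [NeZero N]

def mv (ω : Fin d → Bool) (t : Fin d → ZMod N) : Fin d → ZMod N :=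
  fun i => if ω i then t i else 0

def Sb (g : (Fin d → Bool) → (Fin d → ZMod N) → ℝ) : ℝ :=
  ∑ x : Fin d → ZMod N, ∑ t : Fin d → ZMod N, ∏ ω : Fin d → Bool, g ω (x + mv N d ω t)

variable {d} (a : Fin d)

def pt (y : ZMod N) (r : {j : Fin d // j ≠ a} → ZMod N) : Fin d → ZMod N :=
  fun j => if h : j = a then y else r ⟨j, h⟩

def splitEquiv : (ZMod N × ({j : Fin d // j ≠ a} → ZMod N)) ≃ (Fin d → ZMod N) where
  toFun p := pt N a p.1 p.2
  invFun x := (x a, fun j => x j)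
  left_inv := by
    rintro ⟨y, r⟩
    simp only [pt, Prod.mk.injEq]
    constructor
    · simp
    · funext j
      exact dif_neg j.2
  right_inv := by
    intro x
    funext j
    simp only [pt]
    split <;> simp_all

lemma sum_split (F : (Fin d → ZMod N) → ℝ) :
    ∑ x, F x = ∑ y : ZMod N, ∑ r : {j : Fin d // j ≠ a} → ZMod N, F (pt N a y r) := by
  rw [← Equiv.sum_comp (splitEquiv N a) F, Fintype.sum_prod_type]
  rfl

lemma pt_add_single (y c : ZMod N) (r : {j : Fin d // j ≠ a} → ZMod N) :
    pt N a y r + Pi.single a c = pt N a (y + c) r := by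
  funext j
  by_cases h : j = a
  · subst h; simp [pt]
  · simp [pt, h, Pi.single_eq_of_ne h]

lemma mv_pt (ω : Fin d → Bool) (hω : ω a = false) (ta : ZMod N)
    (tr : {j : Fin d // j ≠ a} → ZMod N) :
    mv N d ω (pt N a ta tr) = mv N d ω (pt N a 0 tr) := by
  funext j
  by_cases h : j = a
  · subst h; simp [mv, hω]
  · simp [mv, pt, h]

lemma mv_update_true (ω : Fin d → Bool) (hω : ω a = false) (t : Fin d → ZMod N) :
    mv N d (Function.update ω a true) t = mv N d ω t + Pi.single a (t a) := by
  funext j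
  by_cases h : j = a
  · subst h; simp [mv, hω]
  · simp [mv, Function.update_of_ne h, Pi.single_eq_of_ne h]

def V (g : (Fin d → Bool) → (Fin d → ZMod N) → ℝ) (b : Bool)
    (xr tr : {j : Fin d // j ≠ a} → ZMod N) (y : ZMod N) : ℝ :=
  ∏ ω ∈ univ.filter (fun ω : Fin d → Bool => ω a = false),
    g (Function.update ω a b) (pt N a y xr + mv N d ω (pt N a 0 tr))

lemma decomp (g : (Fin d → Bool) → (Fin d → ZMod N) → ℝ) :
    Sb N d g = ∑ xr : {j : Fin d // j ≠ a} → ZMod N, ∑ tr : {j : Fin d // j ≠ a} → ZMod N,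
      (∑ y : ZMod N, V N a g false xr tr y) * (∑ y : ZMod N, V N a g true xr tr y) := by
  have key : ∀ (xa ta : ZMod N) (xr tr : {j : Fin d // j ≠ a} → ZMod N),
      (∏ ω : Fin d → Bool, g ω (pt N a xa xr + mv N d ω (pt N a ta tr)))
        = V N a g false xr tr xa * V N a g true xr tr (xa + ta) := by
    intro xa ta xr tr
    rw [← Finset.prod_filter_mul_prod_filter_not univ (fun ω => ω a = false)]
    congr 1
    · refine Finset.prod_congr rfl fun ω hω => ?_
      have hωa : ω a = false := (Finset.mem_filter.mp hω).2
      have h1 : Function.update ω a false = ω := by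
        rw [← hωa]; exact Function.update_eq_self a ω
      rw [h1, mv_pt N a ω hωa]
    · refine Finset.prod_nbij' (fun ω => Function.update ω a false)
        (fun ω => Function.update ω a true) ?_ ?_ ?_ ?_ ?_
      · intro ω hω
        simp [Function.update_self]
      · intro ω hω
        simp [Function.update_self]
      · intro ω hω
        have hωa : ω a = true := by
          have := (Finset.mem_filter.mp hω).2; simpa using this
        show Function.update (Function.update ω a false) a true = ω
        rw [Function.update_idem, ← hωa, Function.update_eq_self]
      · intro ω hω
        have hωa : ω a = false := (Finset.mem_filter.mp hω).2
        show Function.update (Function.update ω a true) a false = ω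
        rw [Function.update_idem, ← hωa, Function.update_eq_self]
      · intro ω hω
        have hωa : ω a = true := by
          have := (Finset.mem_filter.mp hω).2; simpa using this
        have hω' : Function.update ω a false a = false := by simp
        have e1 : Function.update (Function.update ω a false) a true = ω := by
          rw [Function.update_idem, ← hωa, Function.update_eq_self]
        have e2 : mv N d ω (pt N a ta tr)
            = mv N d (Function.update ω a false) (pt N a 0 tr) + Pi.single a ta := by
          conv_lhs => rw [← e1]
          rw [mv_update_true N a _ hω', mv_pt N a _ hω']
          congr 1
          simp [pt]
        rw [e2]
        have e3 : pt N a xa xr + (mv N d (Function.update ω a false) (pt N a 0 tr) + Pi.single a ta)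
            = pt N a (xa + ta) xr + mv N d (Function.update ω a false) (pt N a 0 tr) := by
          rw [← pt_add_single]; abel
        rw [e3]
        congr 1
        exact e1.symm
  calc Sb N d g
      = ∑ xa : ZMod N, ∑ xr, ∑ ta : ZMod N, ∑ tr,
          ∏ ω : Fin d → Bool, g ω (pt N a xa xr + mv N d ω (pt N a ta tr)) := by
        rw [Sb, sum_split N a (fun x => ∑ t, ∏ ω, g ω (x + mv N d ω t))]
        exact Finset.sum_congr rfl fun xa _ => Finset.sum_congr rfl fun xr _ =>
          sum_split N a _
    _ = ∑ xa : ZMod N, ∑ xr, ∑ tr, ∑ ta : ZMod N,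
          V N a g false xr tr xa * V N a g true xr tr (xa + ta) := by
        refine Finset.sum_congr rfl fun xa _ => Finset.sum_congr rfl fun xr _ => ?_
        rw [Finset.sum_comm]
        exact Finset.sum_congr rfl fun tr _ => Finset.sum_congr rfl fun ta _ => key xa ta xr tr
    _ = ∑ xa : ZMod N, ∑ xr, ∑ tr,
          V N a g false xr tr xa * ∑ y : ZMod N, V N a g true xr tr y := by
        refine Finset.sum_congr rfl fun xa _ => Finset.sum_congr rfl fun xr _ =>
          Finset.sum_congr rfl fun tr _ => ?_
        rw [← Finset.mul_sum]
        congr 1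
        exact Fintype.sum_equiv (Equiv.addLeft xa) _ _ fun ta => rfl
    _ = ∑ xr, ∑ tr, (∑ y : ZMod N, V N a g false xr tr y) * (∑ y : ZMod N, V N a g true xr tr y) := by
        rw [Finset.sum_comm]
        refine Finset.sum_congr rfl fun xr _ => ?_
        rw [Finset.sum_comm]
        refine Finset.sum_congr rfl fun tr _ => ?_
        rw [Finset.sum_mul]
end

section
variable (N : ℕ) {d : ℕ} [NeZero N] (a : Fin d)

lemma V_update (g : (Fin d → Bool) → (Fin d → ZMod N) → ℝ) (b c : Bool)
    (xr tr : {j : Fin d // j ≠ a} → ZMod N) (y : ZMod N) :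
    V N a (fun ω => g (Function.update ω a b)) c xr tr y = V N a g b xr tr y := by
  refine Finset.prod_congr rfl fun ω hω => ?_
  show g (Function.update (Function.update ω a c) a b) _ = _
  rw [Function.update_idem]

lemma Sb_nonneg_of_invariant (g : (Fin d → Bool) → (Fin d → ZMod N) → ℝ)
    (hg : ∀ ω, g (Function.update ω a true) = g (Function.update ω a false)) :
    0 ≤ Sb N d g := by
  rw [decomp N a g]
  refine Finset.sum_nonneg fun xr _ => Finset.sum_nonneg fun tr _ => ?_
  have hV : ∀ y, V N a g true xr tr y = V N a g false xr tr y := fun y =>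
    Finset.prod_congr rfl fun ω _ => by rw [hg]
  rw [Finset.sum_congr rfl fun y _ => hV y]
  exact mul_self_nonneg _

lemma cs_step (g : (Fin d → Bool) → (Fin d → ZMod N) → ℝ) :
    (Sb N d g)^2 ≤ Sb N d (fun ω => g (Function.update ω a false))
      * Sb N d (fun ω => g (Function.update ω a true)) := by
  rw [decomp N a g, decomp N a (fun ω => g (Function.update ω a false)),
    decomp N a (fun ω => g (Function.update ω a true))]
  simp only [V_update]
  have := Finset.sum_mul_sq_le_sq_mul_sq univ
    (fun p : ({j : Fin d // j ≠ a} → ZMod N) × ({j : Fin d // j ≠ a} → ZMod N) =>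
      ∑ y : ZMod N, V N a g false p.1 p.2 y)
    (fun p => ∑ y : ZMod N, V N a g true p.1 p.2 y)
  rw [Fintype.sum_prod_type, Fintype.sum_prod_type, Fintype.sum_prod_type] at this
  simpa [sq] using this
end

section
variable (N d : ℕ) [NeZero N]

def rep (s : Finset (Fin d)) (σ : Fin d → Bool) (g : (Fin d → Bool) → (Fin d → ZMod N) → ℝ) :
    (Fin d → Bool) → (Fin d → ZMod N) → ℝ :=
  fun ω x => g (fun i => if i ∈ s then σ i else ω i) x

def AA (s : Finset (Fin d)) : Finset (Fin d → Bool) :=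
  univ.filter (fun σ => ∀ i ∉ s, σ i = false)

lemma merge_update {s : Finset (Fin d)} {a : Fin d} (ha : a ∉ s) (σ ω : Fin d → Bool) (b : Bool) :
    (fun i => if i ∈ s then σ i else Function.update ω a b i)
      = Function.update (fun i => if i ∈ s then σ i else ω i) a b := by
  funext i
  by_cases h : i = a
  · subst h; simp [ha]
  · simp [Function.update_of_ne h]

lemma prod_AA_insert {s : Finset (Fin d)} {a : Fin d} (ha : a ∉ s) (F : (Fin d → Bool) → ℝ) :
    ∏ σ ∈ AA d (insert a s), F σ
      = (∏ σ ∈ AA d s, F (Function.update σ a false))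
        * ∏ σ ∈ AA d s, F (Function.update σ a true) := by
  rw [← Finset.prod_filter_mul_prod_filter_not (AA d (insert a s)) (fun σ => σ a = false)]
  congr 1
  · have hset : (AA d (insert a s)).filter (fun σ => σ a = false) = AA d s := by
      ext σ
      simp only [AA, Finset.mem_filter, Finset.mem_univ, true_and, Finset.mem_insert]
      constructor
      · rintro ⟨h1, h2⟩ i hi
        by_cases hia : i = a
        · subst hia; exact h2
        · exact h1 i (by tauto)
      · intro h
        refine ⟨fun i hi => h i (fun his => hi (Or.inr his)), h a ha⟩
    rw [hset]
    refine Finset.prod_congr rfl fun σ hσ => ?_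
    have hσa : σ a = false := by
      simp only [AA, Finset.mem_filter] at hσ
      exact hσ.2 a ha
    rw [← hσa, Function.update_eq_self]
  · refine Finset.prod_nbij' (fun σ => Function.update σ a false)
      (fun σ => Function.update σ a true) ?_ ?_ ?_ ?_ ?_
    · intro σ hσ
      simp only [AA, Finset.mem_filter, Finset.mem_univ, true_and, Finset.mem_insert] at hσ ⊢
      intro i hi
      by_cases hia : i = a
      · subst hia; simp
      · rw [Function.update_of_ne hia]
        exact hσ.1 i (by tauto)
    · intro σ hσ
      simp only [AA, Finset.mem_filter, Finset.mem_univ, true_and, Finset.mem_insert] at hσ ⊢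
      constructor
      · intro i hi
        push_neg at hi
        rw [Function.update_of_ne hi.1]
        exact hσ i hi.2
      · simp
    · intro σ hσ
      have hσa : σ a = true := by
        simp only [Finset.mem_filter] at hσ
        simpa using hσ.2
      show Function.update (Function.update σ a false) a true = σ
      rw [Function.update_idem, ← hσa, Function.update_eq_self]
    · intro σ hσ
      have hσa : σ a = false := by
        simp only [AA, Finset.mem_filter] at hσ
        exact hσ.2 a ha
      show Function.update (Function.update σ a true) a false = σ
      rw [Function.update_idem, ← hσa, Function.update_eq_self]
    · intro σ hσ
      have hσa : σ a = true := by
        simp only [Finset.mem_filter] at hσ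
        simpa using hσ.2
      show F σ = F (Function.update (Function.update σ a false) a true)
      rw [Function.update_idem, ← hσa, Function.update_eq_self]

lemma rep_insert {s : Finset (Fin d)} {a : Fin d} (ha : a ∉ s) (σ : Fin d → Bool) (b : Bool)
    (g : (Fin d → Bool) → (Fin d → ZMod N) → ℝ) :
    rep N d (insert a s) (Function.update σ a b) g
      = rep N d s σ (fun ω' => g (Function.update ω' a b)) := by
  funext ω x
  show g _ x = g _ x
  congr 1
  funext i
  by_cases hia : i = a
  · subst hia; simp [ha]
  · by_cases his : i ∈ s <;>
      simp [Function.update_of_ne hia, his, hia, Finset.mem_insert]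

lemma claim (s : Finset (Fin d)) :
    ∀ g : (Fin d → Bool) → (Fin d → ZMod N) → ℝ,
      (Sb N d g)^(2^s.card) ≤ ∏ σ ∈ AA d s, Sb N d (rep N d s σ g) := by
  induction s using Finset.induction_on with
  | empty =>
    intro g
    have hA : AA d (∅ : Finset (Fin d)) = {fun _ => false} := by
      ext σ
      simp only [AA, Finset.mem_filter, Finset.mem_univ, true_and, Finset.notMem_empty,
        Finset.mem_singleton]
      constructor
      · intro h; funext i; exact h i (fun h => h.elim)
      · intro h i _; rw [h]
    have hrep : rep N d ∅ (fun _ => false) g = g := by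
      funext ω x
      simp [rep]
    rw [hA, Finset.prod_singleton, hrep, Finset.card_empty, pow_zero, pow_one]
  | @insert a s ha ih =>
    intro g
    set gf := fun ω => g (Function.update ω a false) with hgf
    set gt := fun ω => g (Function.update ω a true) with hgt
    have hinv : ∀ b σ, ∀ ω, rep N d s σ (fun ω' => g (Function.update ω' a b))
        (Function.update ω a true) = rep N d s σ (fun ω' => g (Function.update ω' a b))
        (Function.update ω a false) := by
      intro b σ ω
      show g (Function.update (fun i => if i ∈ s then σ i else Function.update ω a true i) a b)
        = g (Function.update (fun i => if i ∈ s then σ i else Function.update ω a false i) a b)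
      rw [merge_update d ha, merge_update d ha, Function.update_idem, Function.update_idem]
    have hgtnn : 0 ≤ Sb N d gt := by
      refine Sb_nonneg_of_invariant N a gt fun ω => ?_
      show g (Function.update (Function.update ω a true) a true)
        = g (Function.update (Function.update ω a false) a true)
      rw [Function.update_idem, Function.update_idem]
    have hrepnn : ∀ b σ, 0 ≤ Sb N d (rep N d s σ (fun ω' => g (Function.update ω' a b))) :=
      fun b σ => Sb_nonneg_of_invariant N a _ (hinv b σ)
    calc (Sb N d g)^(2^(insert a s).card)
        = ((Sb N d g)^2)^(2^s.card) := by
          rw [Finset.card_insert_of_notMem ha, pow_succ', pow_mul]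
      _ ≤ (Sb N d gf * Sb N d gt)^(2^s.card) :=
          pow_le_pow_left₀ (sq_nonneg _) (cs_step N a g) _
      _ = (Sb N d gf)^(2^s.card) * (Sb N d gt)^(2^s.card) := mul_pow _ _ _
      _ ≤ (∏ σ ∈ AA d s, Sb N d (rep N d s σ gf)) * ∏ σ ∈ AA d s, Sb N d (rep N d s σ gt) := by
          refine mul_le_mul (ih gf) (ih gt) (pow_nonneg hgtnn _) (Finset.prod_nonneg ?_)
          intro σ _
          exact hrepnn false σ
      _ = ∏ σ ∈ AA d (insert a s), Sb N d (rep N d (insert a s) σ g) := by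
          rw [prod_AA_insert d ha (fun σ => Sb N d (rep N d (insert a s) σ g))]
          congr 1
          · exact Finset.prod_congr rfl fun σ _ => by rw [rep_insert N d ha σ false g]
          · exact Finset.prod_congr rfl fun σ _ => by rw [rep_insert N d ha σ true g]
end

section
variable (N d : ℕ) [NeZero N]

lemma claim_univ (g : (Fin d → Bool) → (Fin d → ZMod N) → ℝ) :
    (Sb N d g)^(2^d) ≤ ∏ σ : Fin d → Bool, Sb N d (fun _ => g σ) := by
  have h := claim N d Finset.univ g
  rw [Finset.card_univ, Fintype.card_fin] at h
  have hA : AA d (Finset.univ : Finset (Fin d)) = Finset.univ := by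
    ext σ
    simp [AA]
  rw [hA] at h
  refine h.trans_eq (Finset.prod_congr rfl fun σ _ => ?_)
  congr 1
  funext ω x
  show g _ x = g σ x
  congr 1
  funext i
  simp

lemma Sb_const_nonneg (hd : 0 < d) (h : (Fin d → ZMod N) → ℝ) :
    0 ≤ Sb N d (fun _ => h) :=
  Sb_nonneg_of_invariant N (⟨0, hd⟩ : Fin d) _ (fun _ => rfl)

lemma coord (hd : 0 < d) (g : (Fin d → Bool) → (Fin d → ZMod N) → ℝ) :
    Sb N d g / (N : ℝ) ^ (2 * d)
      ≤ ∏ ω : Fin d → Bool, (Sb N d (fun _ => g ω) / (N : ℝ) ^ (2 * d)) ^ ((1 : ℝ) / 2 ^ d) := by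
  have hN0 : (0 : ℝ) < (N : ℝ) := by
    exact_mod_cast Nat.pos_of_ne_zero (NeZero.ne N)
  have hC : (0 : ℝ) < (N : ℝ) ^ (2 * d) := pow_pos hN0 _
  have hnn : ∀ σ : Fin d → Bool, 0 ≤ Sb N d (fun _ => g σ) :=
    fun σ => Sb_const_nonneg N d hd (g σ)
  have he0 : (0:ℝ) ≤ (1 : ℝ) / 2 ^ d := by positivity
  have hcard : Fintype.card (Fin d → Bool) = 2 ^ d := by simp
  have hmul : ((1 : ℝ) / 2 ^ d) * ((2 ^ d : ℕ) : ℝ) = 1 := by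
    push_cast
    field_simp
  have hmul2 : (((2 ^ d : ℕ) : ℝ)) * ((1 : ℝ) / 2 ^ d) = 1 := by
    rw [mul_comm]; exact hmul
  have hCpow : ((((N : ℝ) ^ (2 * d)) ^ ((1 : ℝ) / 2 ^ d)) : ℝ) ^ (2 ^ d : ℕ)
      = (N : ℝ) ^ (2 * d) := by
    rw [← Real.rpow_natCast (((N : ℝ) ^ (2 * d)) ^ ((1 : ℝ) / 2 ^ d)) (2 ^ d),
      ← Real.rpow_mul hC.le, hmul, Real.rpow_one]
  have hRHS : ∏ ω : Fin d → Bool, (Sb N d (fun _ => g ω) / (N : ℝ) ^ (2 * d)) ^ ((1 : ℝ) / 2 ^ d)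
      = (∏ ω : Fin d → Bool, (Sb N d (fun _ => g ω)) ^ ((1 : ℝ) / 2 ^ d))
        / (N : ℝ) ^ (2 * d) := by
    calc ∏ ω : Fin d → Bool, (Sb N d (fun _ => g ω) / (N : ℝ) ^ (2 * d)) ^ ((1 : ℝ) / 2 ^ d)
        = ∏ ω : Fin d → Bool,
            (Sb N d (fun _ => g ω)) ^ ((1 : ℝ) / 2 ^ d)
              / ((N : ℝ) ^ (2 * d)) ^ ((1 : ℝ) / 2 ^ d) := by
          exact Finset.prod_congr rfl fun ω _ => Real.div_rpow (hnn ω) hC.le _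
      _ = (∏ ω : Fin d → Bool, (Sb N d (fun _ => g ω)) ^ ((1 : ℝ) / 2 ^ d))
            / (((N : ℝ) ^ (2 * d)) ^ ((1 : ℝ) / 2 ^ d)) ^ (2 ^ d : ℕ) := by
          rw [Finset.prod_div_distrib, Finset.prod_const, Finset.card_univ, hcard]
      _ = _ := by rw [hCpow]
  rw [hRHS]
  have hmain : Sb N d g ≤ ∏ ω : Fin d → Bool, (Sb N d (fun _ => g ω)) ^ ((1 : ℝ) / 2 ^ d) := by
    have hPnn : 0 ≤ ∏ σ : Fin d → Bool, Sb N d (fun _ => g σ) :=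
      Finset.prod_nonneg fun σ _ => hnn σ
    have hprodr : (∏ σ : Fin d → Bool, Sb N d (fun _ => g σ)) ^ ((1 : ℝ) / 2 ^ d)
        = ∏ ω : Fin d → Bool, (Sb N d (fun _ => g ω)) ^ ((1 : ℝ) / 2 ^ d) := by
      exact (Real.finset_prod_rpow _ _ (fun σ _ => hnn σ) _).symm
    rw [← hprodr]
    rcases le_or_gt (Sb N d g) 0 with hS | hS
    · exact hS.trans (Real.rpow_nonneg hPnn _)
    · have h1 : Sb N d g = ((Sb N d g) ^ (2 ^ d : ℕ)) ^ ((1 : ℝ) / 2 ^ d) := by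
        rw [← Real.rpow_natCast (Sb N d g) (2 ^ d), ← Real.rpow_mul hS.le, hmul2,
          Real.rpow_one]
      rw [h1]
      exact Real.rpow_le_rpow (pow_nonneg hS.le _) (claim_univ N d g) he0
  gcongr
end

lemma basis_change (N d : ℕ) [NeZero N] (e : Fin d → (Fin d → ZMod N))
    (E : (Fin d → ZMod N) ≃ₗ[ZMod N] (Fin d → ZMod N))
    (hE : ∀ c, E c = ∑ i, c i • e i)
    (h : (Fin d → Bool) → (Fin d → ZMod N) → ℝ) :
    (∑ x : Fin d → ZMod N, ∑ t : Fin d → ZMod N,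
        ∏ ω : Fin d → Bool, h ω (x + ∑ i : Fin d, if ω i then t i • e i else 0))
      = Sb N d (fun ω x => h ω (E x)) := by
  have key : ∀ (x t : Fin d → ZMod N) (ω : Fin d → Bool),
      x + (∑ i : Fin d, if ω i then t i • e i else 0) = E (E.symm x + mv N d ω t) := by
    intro x t ω
    rw [map_add, LinearEquiv.apply_symm_apply, hE]
    congr 1
    refine Finset.sum_congr rfl fun i _ => ?_
    by_cases hi : ω i <;> simp [mv, hi]
  calc (∑ x : Fin d → ZMod N, ∑ t : Fin d → ZMod N,
        ∏ ω : Fin d → Bool, h ω (x + ∑ i : Fin d, if ω i then t i • e i else 0))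
      = ∑ x : Fin d → ZMod N, ∑ t : Fin d → ZMod N,
          ∏ ω : Fin d → Bool, h ω (E (E.symm x + mv N d ω t)) := by
        refine Finset.sum_congr rfl fun x _ => Finset.sum_congr rfl fun t _ =>
          Finset.prod_congr rfl fun ω _ => ?_
        rw [key]
    _ = Sb N d (fun ω x => h ω (E x)) := by
        rw [Sb, ← Equiv.sum_comp E.toEquiv
          (fun x => ∑ t : Fin d → ZMod N, ∏ ω : Fin d → Bool, h ω (E (E.symm x + mv N d ω t)))]
        refine Finset.sum_congr rfl fun x _ => Finset.sum_congr rfl fun t _ =>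
          Finset.prod_congr rfl fun ω _ => ?_
        simp

theorem box_gowers_cauchy_schwarz (N d : ℕ) [NeZero N] (hN : N.Prime)
    (e : Fin d → (Fin d → ZMod N))
    (he : LinearIndependent (ZMod N) e)
    (hspan : Submodule.span (ZMod N) (Set.range e) = ⊤)
    (f : (Fin d → Bool) → (Fin d → ZMod N) → ℝ) :
    (∑ x : Fin d → ZMod N, ∑ t : Fin d → ZMod N,
        ∏ ω : Fin d → Bool,
          f ω (x + ∑ i : Fin d, if ω i then t i • e i else 0)) /
      (N : ℝ) ^ (2 * d)
    ≤ ∏ ω : Fin d → Bool,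
        ((∑ x : Fin d → ZMod N, ∑ t : Fin d → ZMod N,
            ∏ ω' : Fin d → Bool,
              f ω (x + ∑ i : Fin d, if ω' i then t i • e i else 0)) /
          (N : ℝ) ^ (2 * d)) ^ ((1 : ℝ) / 2 ^ d) := by
  rcases Nat.eq_zero_or_pos d with hd | hd
  · subst hd
    have e0 : ((1:ℝ) / 2 ^ (0:ℕ)) = 1 := by norm_num
    rw [e0]
    simp only [Nat.mul_zero, pow_zero, div_one, Real.rpow_one]
    refine le_of_eq ?_
    rw [Fintype.prod_subsingleton _ (fun i : Fin 0 => i.elim0)]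
    refine Finset.sum_congr rfl fun x _ => Finset.sum_congr rfl fun t _ =>
      Finset.prod_congr rfl fun ω _ => ?_
    congr 1
    exact Subsingleton.elim _ _
  · set b : Module.Basis (Fin d) (ZMod N) (Fin d → ZMod N) := Module.Basis.mk he (by rw [hspan]) with hb
    set E := b.equivFun.symm with hEdef
    have hE : ∀ c, E c = ∑ i, c i • e i := by
      intro c
      rw [hEdef, Module.Basis.equivFun_symm_apply]
      refine Finset.sum_congr rfl fun i _ => ?_
      rw [hb, Module.Basis.coe_mk]
    rw [basis_change N d e E hE f]
    have hR : ∀ ω : Fin d → Bool,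
        (∑ x : Fin d → ZMod N, ∑ t : Fin d → ZMod N,
            ∏ ω' : Fin d → Bool,
              f ω (x + ∑ i : Fin d, if ω' i then t i • e i else 0))
          = Sb N d (fun _ x => f ω (E x)) := fun ω =>
      basis_change N d e E hE (fun _ => f ω)
    calc Sb N d (fun ω x => f ω (E x)) / (N : ℝ) ^ (2 * d)
        ≤ ∏ ω : Fin d → Bool,
            (Sb N d (fun _ x => f ω (E x)) / (N : ℝ) ^ (2 * d)) ^ ((1 : ℝ) / 2 ^ d) :=
          coord N d hd _
      _ = _ := by
          refine Finset.prod_congr rfl fun ω _ => ?_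
          rw [hR ω]
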